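/- For every complex number s with Re(s) > 1, letting Λ₁(s) = ∑_{n=1}^∞ f(n)/n^s, where f(n) = 1 if n is expressible as x² + y² with x, y integers and f(n) = 0 otherwise, one has Λ₁(s)² = ζ(s) · L(s, χ₋₄) · (1 - 2^{-s})^{-1} · ∏_{p prime, p ≡ 3 (mod 4)} (1 - p^{-2s})^{-1}, where ζ is the Riemann zeta function and L(s, χ₋₄) = ∑_{n=1}^∞ χ₋₄(n)/n^s is the Dirichlet L-function of the nontrivial character χ₋₄ modulo 4. -/

import Mathlib

open Complex


open Classical in
/-- The indicator function of sums of two squares: `f n = 1` if `n = x² + y²` for some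
integers `x, y`, and `f n = 0` otherwise. -/
noncomputable def sumTwoSquaresIndicator (n : ℕ) : ℂ :=
  if ∃ x y : ℤ, (n : ℤ) = x ^ 2 + y ^ 2 then 1 else 0

lemma sumsq_nat_iff (n : ℕ) :
    (∃ x y : ℤ, (n : ℤ) = x ^ 2 + y ^ 2) ↔ ∃ x y : ℕ, n = x ^ 2 + y ^ 2 := by
  constructor
  · rintro ⟨x, y, h⟩
    refine ⟨x.natAbs, y.natAbs, ?_⟩
    have : (n : ℤ) = ((x.natAbs : ℤ)) ^ 2 + ((y.natAbs : ℤ)) ^ 2 := by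
      simp [Int.natCast_natAbs, sq_abs, h]
    exact_mod_cast this
  · rintro ⟨x, y, rfl⟩
    exact ⟨x, y, by push_cast; ring⟩

lemma sumsq_iff (n : ℕ) :
    (∃ x y : ℤ, (n : ℤ) = x ^ 2 + y ^ 2) ↔
      ∀ q : ℕ, q.Prime → q % 4 = 3 → Even (n.factorization q) := by
  rw [sumsq_nat_iff, Nat.eq_sq_add_sq_iff]
  constructor
  · intro h q hq h4
    by_cases hm : q ∈ n.primeFactors
    · rw [Nat.factorization_def n hq]
      exact h q hm h4
    · rw [← Nat.support_factorization, Finsupp.notMem_support_iff] at hm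
      rw [hm]; exact Even.zero
  · intro h q hq h4
    have := h q (Nat.prime_of_mem_primeFactors hq) h4
    rwa [Nat.factorization_def n (Nat.prime_of_mem_primeFactors hq)] at this

lemma ind_one : sumTwoSquaresIndicator 1 = 1 := by
  rw [sumTwoSquaresIndicator, if_pos ⟨1, 0, by norm_num⟩]

lemma ind_mul {m n : ℕ} (h : Nat.Coprime m n) :
    sumTwoSquaresIndicator (m * n) =
      sumTwoSquaresIndicator m * sumTwoSquaresIndicator n := by
  rcases eq_or_ne m 0 with rfl | hm
  · have : n = 1 := Nat.coprime_zero_left n |>.mp h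
    subst this
    simp [ind_one]
  rcases eq_or_ne n 0 with rfl | hn
  · have : m = 1 := Nat.coprime_zero_right m |>.mp h
    subst this
    simp [ind_one]
  have key : ∀ q : ℕ, q.Prime → m.factorization q = 0 ∨ n.factorization q = 0 := by
    intro q hq
    by_contra hc
    push_neg at hc
    have h1 : q ∣ m := Nat.dvd_of_factorization_pos hc.1
    have h2 : q ∣ n := Nat.dvd_of_factorization_pos hc.2
    have : q ∣ 1 := h ▸ Nat.dvd_gcd h1 h2
    exact hq.one_lt.ne' (Nat.dvd_one.mp this)
  have hiff : (∃ x y : ℤ, ((m * n : ℕ) : ℤ) = x ^ 2 + y ^ 2) ↔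
      ((∃ x y : ℤ, (m : ℤ) = x ^ 2 + y ^ 2) ∧ (∃ x y : ℤ, (n : ℤ) = x ^ 2 + y ^ 2)) := by
    rw [sumsq_iff, sumsq_iff, sumsq_iff]
    constructor
    · intro H
      constructor <;> intro q hq h4 <;>
        · have hh := H q hq h4
          rw [Nat.factorization_mul hm hn] at hh
          simp only [Finsupp.add_apply] at hh
          rcases key q hq with h0 | h0 <;> simp_all
    · rintro ⟨H1, H2⟩ q hq h4
      rw [Nat.factorization_mul hm hn]
      simp only [Finsupp.add_apply]
      exact (H1 q hq h4).add (H2 q hq h4)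
  classical
  rw [sumTwoSquaresIndicator, sumTwoSquaresIndicator, sumTwoSquaresIndicator]
  by_cases H : ∃ x y : ℤ, ((m * n : ℕ) : ℤ) = x ^ 2 + y ^ 2
  · rw [if_pos H]
    obtain ⟨H1, H2⟩ := hiff.mp H
    rw [if_pos H1, if_pos H2, mul_one]
  · rw [if_neg H]
    rcases not_and_or.mp (hiff.not.mp H) with H' | H'
    · rw [if_neg H', zero_mul]
    · rw [if_neg H', mul_zero]

lemma ind_pp_ne3 {p : ℕ} (hp : p.Prime) (h : p % 4 ≠ 3) (e : ℕ) :
    sumTwoSquaresIndicator (p ^ e) = 1 := by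
  rw [sumTwoSquaresIndicator, if_pos]
  rw [sumsq_iff]
  intro q hq h4
  rw [hp.factorization_pow, Finsupp.single_apply]
  rcases eq_or_ne p q with rfl | hpq
  · exact absurd h4 h
  · simp [hpq]

lemma ind_pp_3 {p : ℕ} (hp : p.Prime) (h : p % 4 = 3) (e : ℕ) :
    sumTwoSquaresIndicator (p ^ e) = if Even e then 1 else 0 := by
  rw [sumTwoSquaresIndicator]
  by_cases he : Even e
  · rw [if_pos he, if_pos]
    rw [sumsq_iff]
    intro q hq h4
    rw [hp.factorization_pow, Finsupp.single_apply]
    split <;> simp [he]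
  · rw [if_neg he, if_neg]
    rw [sumsq_iff]
    push_neg
    exact ⟨p, hp, h, by rw [hp.factorization_pow, Finsupp.single_apply, if_pos rfl]; exact he⟩

lemma ind_norm_le (n : ℕ) : ‖sumTwoSquaresIndicator n‖ ≤ 1 := by
  rw [sumTwoSquaresIndicator]; split <;> simp

def primesEquiv3 : {p : ℕ // p.Prime ∧ p % 4 = 3} ≃
    {p : Nat.Primes // (p : ℕ) % 4 = 3} where
  toFun p := ⟨⟨p.1, p.2.1⟩, p.2.2⟩
  invFun q := ⟨q.1.1, q.1.2, q.2⟩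
  left_inv p := rfl
  right_inv q := rfl

noncomputable def chi4C : DirichletCharacter ℂ 4 := ZMod.χ₄.ringHomComp (Int.castRingHom ℂ)

theorem lambda_one_sq_eq (s : ℂ) (hs : 1 < s.re) :
    (LSeries sumTwoSquaresIndicator s) ^ 2 =
      riemannZeta s * LSeries (fun n => ((ZMod.χ₄ (n : ZMod 4) : ℤ) : ℂ)) s *
        (1 - (2 : ℂ) ^ (-s))⁻¹ *
        ∏' p : {p : ℕ // p.Prime ∧ p % 4 = 3}, (1 - (p : ℂ) ^ (-(2 * s)))⁻¹ := by
  classical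
  have hs0 : s ≠ 0 := ne_zero_of_one_lt_re hs
  have hs2 : 1 < (2 * s).re := by
    have : (2 * s).re = 2 * s.re := by simp [Complex.mul_re]
    rw [this]; linarith
  set Z := riemannZetaSummandHom hs0 with hZdef
  set F : ℕ → ℂ := fun n => sumTwoSquaresIndicator n * Z n with hFdef
  have hF1 : F 1 = 1 := by simp [hFdef, ind_one]
  have hF0 : F 0 = 0 := by simp [hFdef]
  have hFmul : ∀ {m n : ℕ}, Nat.Coprime m n → F (m * n) = F m * F n := by
    intro m n h
    simp only [hFdef, ind_mul h, map_mul]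
    ring
  have hFsum : Summable (fun n => ‖F n‖) := by
    refine (summable_riemannZetaSummand hs).of_nonneg_of_le (fun _ => norm_nonneg _) fun n => ?_
    rw [norm_mul]
    exact mul_le_of_le_one_left (norm_nonneg _) (ind_norm_le n)
  have hnorm : ∀ p : Nat.Primes, ‖Z (p : ℕ)‖ < 1 := fun p =>
    (summable_riemannZetaSummand hs).of_norm.norm_lt_one (f := Z.toMonoidHom) p.prop.one_lt
  have hprod := EulerProduct.eulerProduct_hasProd hF1 hFmul hFsum hF0
  -- identify the sum with the L-series
  have hsum_eq : ∑' n, F n = LSeries sumTwoSquaresIndicator s := by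
    refine tsum_congr fun n => ?_
    rcases eq_or_ne n 0 with rfl | hn
    · simp [hF0]
    · rw [LSeries.term_of_ne_zero hn]
      simp [hFdef, hZdef, riemannZetaSummandHom, cpow_neg, div_eq_mul_inv]
  rw [hsum_eq] at hprod
  -- local factors
  set loc : Nat.Primes → ℂ := fun p =>
    if (p : ℕ) % 4 = 3 then (1 - (p : ℂ) ^ (-(2 * s)))⁻¹ else (1 - (p : ℂ) ^ (-s))⁻¹
    with hlocdef
  have hZp : ∀ p : Nat.Primes, Z (p : ℕ) = (p : ℂ) ^ (-s) := fun p => rfl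
  have hsq : ∀ p : Nat.Primes, (p : ℂ) ^ (-(2 * s)) = Z (p : ℕ) * Z (p : ℕ) := by
    intro p
    have hp0 : ((p : ℕ) : ℂ) ≠ 0 := Nat.cast_ne_zero.mpr p.prop.pos.ne'
    rw [hZp, ← cpow_add _ _ hp0]
    ring_nf
  have hloc : ∀ p : Nat.Primes, (∑' e, F ((p : ℕ) ^ e)) = loc p := by
    intro p
    have hterm : ∀ e : ℕ, F ((p : ℕ) ^ e) = sumTwoSquaresIndicator ((p : ℕ) ^ e) * (Z (p : ℕ)) ^ e := by
      intro e
      simp only [hFdef, map_pow]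
    by_cases h3 : (p : ℕ) % 4 = 3
    · have : ∀ e : ℕ, F ((p : ℕ) ^ e) = if Even e then (Z (p : ℕ)) ^ e else 0 := by
        intro e
        rw [hterm, ind_pp_3 p.prop h3]
        split <;> simp
      rw [tsum_congr this]
      have hinj : Function.Injective (fun k : ℕ => 2 * k) := fun a b hab => by dsimp at hab; omega
      have hsupp : Function.support (fun e : ℕ => if Even e then (Z (p : ℕ)) ^ e else 0) ⊆
          Set.range (fun k : ℕ => 2 * k) := by
        intro e he
        simp only [Function.mem_support, ne_eq, ite_eq_right_iff, not_forall] at he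
        obtain ⟨⟨k, hk⟩, -⟩ := he
        exact ⟨k, by dsimp; omega⟩
      rw [← hinj.tsum_eq hsupp]
      have : ∀ k : ℕ, (if Even (2 * k) then (Z (p : ℕ)) ^ (2 * k) else 0) =
          (Z (p : ℕ) * Z (p : ℕ)) ^ k := by
        intro k
        rw [if_pos ⟨k, by ring⟩, ← sq, ← pow_mul]
      rw [tsum_congr this, tsum_geometric_of_norm_lt_one, hlocdef]
      · simp only [h3, if_pos, hsq p]
      · rw [norm_mul]
        nlinarith [hnorm p, norm_nonneg (Z (p : ℕ))]
    · have : ∀ e : ℕ, F ((p : ℕ) ^ e) = (Z (p : ℕ)) ^ e := by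
        intro e
        rw [hterm, ind_pp_ne3 p.prop h3, one_mul]
      rw [tsum_congr this, tsum_geometric_of_norm_lt_one (hnorm p), hlocdef]
      simp only [h3, if_neg, hZp]
      simp [h3]
  have hprodL : HasProd loc (LSeries sumTwoSquaresIndicator s) := by
    rwa [funext hloc] at hprod
  -- RHS Euler products
  have hζ := riemannZeta_eulerProduct_hasProd hs
  have hχ := DirichletCharacter.LSeries_eulerProduct_hasProd chi4C hs
  have hχfun : (fun n : ℕ => ((ZMod.χ₄ (n : ZMod 4) : ℤ) : ℂ)) = fun n : ℕ => chi4C n := by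
    funext n
    simp [chi4C, MulChar.ringHomComp_apply]
  -- the factor at 2
  set two : Nat.Primes := ⟨2, Nat.prime_two⟩ with htwodef
  set f2 : Nat.Primes → ℂ := fun p => if p = two then (1 - (p : ℂ) ^ (-s))⁻¹ else 1 with hf2def
  have htwo : HasProd f2 ((1 - (2 : ℂ) ^ (-s))⁻¹) := by
    have h := hasProd_single (f := f2) two (fun p hp => if_neg hp)
    have : f2 two = (1 - (2 : ℂ) ^ (-s))⁻¹ := by
      rw [hf2def]
      simp only [if_pos rfl]
      norm_num
    rwa [this] at h
  -- the factor over primes ≡ 3 mod 4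
  have hs20 : (2 * s) ≠ 0 := ne_zero_of_one_lt_re hs2
  set Z2 := riemannZetaSummandHom hs20 with hZ2def
  have hsum2 : Summable (fun n => ‖Z2 n‖) := summable_riemannZetaSummand hs2
  have hnorm2 : ∀ {q : ℕ}, 1 < q → ‖Z2 q‖ < 1 := fun hq =>
    hsum2.of_norm.norm_lt_one (f := Z2.toMonoidHom) hq
  have hZ2p : ∀ q : ℕ, Z2 q = (q : ℂ) ^ (-(2 * s)) := fun q => rfl
  set S := {p : ℕ // p.Prime ∧ p % 4 = 3} with hSdef
  have hne : ∀ p : S, 1 - (p : ℂ) ^ (-(2 * s)) ≠ 0 := by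
    intro p h
    have := hnorm2 p.2.1.one_lt
    rw [hZ2p, ← sub_eq_zero.mp h] at this
    simp at this
  have hlogsum : Summable fun n : ℕ => -Complex.log (1 - Z2 n) :=
    hsum2.of_norm.clog_one_sub.neg
  have hlogS : Summable fun p : S => -Complex.log (1 - Z2 (p : ℕ)) :=
    hlogsum.comp_injective Subtype.val_injective
  have hPS := hlogS.hasSum.cexp
  have hfunS : (Complex.exp ∘ fun p : S => (-Complex.log (1 - Z2 (p : ℕ)))) =
      fun p : S => (1 - (p : ℂ) ^ (-(2 * s)))⁻¹ := by
    funext p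
    simp only [Function.comp_apply]
    rw [exp_neg, exp_log]
    · rw [hZ2p]
    · rw [hZ2p]; exact hne p
  rw [hfunS] at hPS
  have hMult : Multipliable (fun p : S => (1 - (p : ℂ) ^ (-(2 * s)))⁻¹) := ⟨_, hPS⟩
  set P3 : ℂ := ∏' p : S, (1 - (p : ℂ) ^ (-(2 * s)))⁻¹ with hP3def
  have hP3 : HasProd (fun p : S => (1 - (p : ℂ) ^ (-(2 * s)))⁻¹) P3 := hMult.hasProd
  -- transfer to a product over all primes
  set s3 : Set Nat.Primes := {p : Nat.Primes | (p : ℕ) % 4 = 3} with hs3def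
  set f3 : Nat.Primes → ℂ := fun p => (1 - (p : ℂ) ^ (-(2 * s)))⁻¹ with hf3def
  have hcomp : ((fun p : s3 => f3 p) ∘ primesEquiv3) =
      fun p : S => (1 - (p : ℂ) ^ (-(2 * s)))⁻¹ := by
    funext p
    simp [hf3def, primesEquiv3]
    rfl
  have hP3'' : HasProd (fun p : s3 => f3 p) P3 :=
    primesEquiv3.hasProd_iff.mp (hcomp ▸ hP3)
  have hthree : HasProd (Set.mulIndicator s3 f3) P3 :=
    hasProd_subtype_iff_mulIndicator.mp hP3''
  -- combine
  have hRHS := ((hζ.mul hχ).mul htwo).mul hthree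
  -- pointwise identity
  have hpoint : ∀ p : Nat.Primes, loc p * loc p =
      (((1 - (p : ℂ) ^ (-s))⁻¹ * (1 - chi4C ((p : ℕ) : ZMod 4) * (p : ℂ) ^ (-s))⁻¹) * f2 p) *
        Set.mulIndicator s3 f3 p := by
    intro p
    set q : ℕ := (p : ℕ) with hqdef
    set x : ℂ := (p : ℂ) ^ (-s) with hxdef
    have hx : ‖x‖ < 1 := hnorm p
    have h1x : (1 : ℂ) - x ≠ 0 := by
      intro h
      rw [← sub_eq_zero.mp h] at hx
      simp at hx
    have h1x' : (1 : ℂ) + x ≠ 0 := by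
      intro h
      have : x = -1 := by linear_combination h
      rw [this] at hx
      simp at hx
    have hq2 : q % 4 = 2 → q = 2 := by
      intro h2
      have hdvd : 2 ∣ q := by omega
      exact ((Nat.prime_dvd_prime_iff_eq Nat.prime_two p.prop).mp hdvd).symm
    have hq0 : q % 4 ≠ 0 := by
      intro h0
      have hdvd : 2 ∣ q := by omega
      have := (Nat.prime_dvd_prime_iff_eq Nat.prime_two p.prop).mp hdvd
      omega
    have hq4 : q % 4 = 1 ∨ q % 4 = 2 ∨ q % 4 = 3 := by
      have hlt : q % 4 < 4 := Nat.mod_lt q (by norm_num)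
      omega
    rcases hq4 with h1 | h2 | h3
    · -- q ≡ 1 mod 4
      have hχ1 : chi4C ((q : ZMod 4)) = 1 := by
        have := ZMod.χ₄_nat_one_mod_four h1
        simp [chi4C, MulChar.ringHomComp_apply, this]
      have hp2 : p ≠ two := by
        intro h
        have : q = 2 := congrArg Subtype.val h
        omega
      simp only [hlocdef, hf2def, hχ1]
      rw [if_neg (by omega : ¬ q % 4 = 3), if_neg hp2,
        Set.mulIndicator_of_notMem (by simp only [hs3def, Set.mem_setOf_eq]; omega)]
      ring
    · -- q = 2
      have hq2' : q = 2 := hq2 h2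
      have hptwo : p = two := Subtype.ext hq2'
      have hχ2 : chi4C ((q : ZMod 4)) = 0 := by
        have h0 : ZMod.χ₄ ((q : ℕ) : ZMod 4) = 0 := by
          rw [ZMod.χ₄_nat_eq_if_mod_four]
          simp [show q % 2 = 0 by omega]
        simp [chi4C, MulChar.ringHomComp_apply, h0]
      simp only [hlocdef, hf2def, hχ2]
      rw [if_neg (by omega : ¬ q % 4 = 3), if_pos hptwo,
        Set.mulIndicator_of_notMem (by simp only [hs3def, Set.mem_setOf_eq]; omega)]
      simp only [zero_mul, sub_zero, inv_one]
      ring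
    · -- q ≡ 3 mod 4
      have hχ3 : chi4C ((q : ZMod 4)) = -1 := by
        have := ZMod.χ₄_nat_three_mod_four h3
        simp [chi4C, MulChar.ringHomComp_apply, this]
      have hp2 : p ≠ two := by
        intro h
        have : q = 2 := congrArg Subtype.val h
        omega
      have hy : (1 : ℂ) - (p : ℂ) ^ (-(2 * s)) = (1 - x) * (1 + x) := by
        rw [hsq p, hZp p, ← hxdef]
        ring
      have hneg : (1 : ℂ) - (-1) * x = 1 + x := by ring
      simp only [hlocdef, hf2def, hχ3]
      rw [if_pos h3, if_neg hp2,
        Set.mulIndicator_of_mem (by simp only [hs3def, Set.mem_setOf_eq]; omega) f3]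
      simp only [hf3def]
      rw [hy, mul_inv, hneg]
      ring
  have hfun2 : (fun p : Nat.Primes => loc p * loc p) = fun p : Nat.Primes =>
      (((1 - (p : ℂ) ^ (-s))⁻¹ * (1 - chi4C ((p : ℕ) : ZMod 4) * (p : ℂ) ^ (-s))⁻¹) * f2 p) *
        Set.mulIndicator s3 f3 p := funext hpoint
  have hL2 : HasProd (fun p : Nat.Primes => loc p * loc p)
      (riemannZeta s * LSeries (fun n => chi4C n) s * (1 - (2 : ℂ) ^ (-s))⁻¹ * P3) := by
    rw [hfun2]
    exact hRHS
  have hfinal := (hprodL.mul hprodL).unique hL2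
  rw [sq, hχfun]
  exact hfinal
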